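/- If 0 < x ≤ y < 1/2, then Φ̄^{−1}(x) − Φ̄^{−1}(y) ≥ ( (Φ̄^{−1}(y))² / (1 + (Φ̄^{−1}(y))²) ) · (y − x)/( y·Φ̄^{−1}(y) ). -/

import Mathlib

open Real MeasureTheory Set Filter Topology

/-- Standard normal density. -/
noncomputable def gphi (t : ℝ) : ℝ := (Real.sqrt (2 * Real.pi))⁻¹ * Real.exp (-(t ^ 2) / 2)

/-- Standard normal upper-tail (survival) function. -/
noncomputable def Phibar (t : ℝ) : ℝ := ∫ s in Set.Ioi t, gphi s

/-- Inverse of the standard normal upper-tail function. -/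
noncomputable def PhibarInv (x : ℝ) : ℝ := Function.invFun Phibar x

lemma gphi_eq (t : ℝ) : gphi t = (Real.sqrt (2 * Real.pi))⁻¹ * Real.exp (-(1/2 : ℝ) * t ^ 2) := by
  unfold gphi; ring_nf

lemma gphi_pos (t : ℝ) : 0 < gphi t :=
  mul_pos (inv_pos.2 (Real.sqrt_pos.2 (by positivity))) (Real.exp_pos _)

lemma gphi_cont : Continuous gphi := by
  unfold gphi; fun_prop

lemma gphi_integrable : Integrable gphi := by
  have h : Integrable (fun t : ℝ => Real.exp (-(1/2 : ℝ) * t ^ 2)) :=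
    integrable_exp_neg_mul_sq (by norm_num)
  have h2 := h.const_mul (Real.sqrt (2 * Real.pi))⁻¹
  exact h2.congr (by filter_upwards with t using (gphi_eq t).symm)

lemma integral_gphi : ∫ t, gphi t = 1 := by
  have h : ∫ t : ℝ, Real.exp (-(1/2 : ℝ) * t ^ 2) = Real.sqrt (Real.pi / (1/2)) :=
    integral_gaussian (1/2)
  have : ∫ t, gphi t = (Real.sqrt (2 * Real.pi))⁻¹ * Real.sqrt (Real.pi / (1/2)) := by
    rw [← h, ← integral_const_mul]
    exact integral_congr_ae (by filter_upwards with t using gphi_eq t)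
  rw [this, show Real.pi / (1/2) = 2 * Real.pi by ring]
  exact inv_mul_cancel₀ (ne_of_gt (Real.sqrt_pos.2 (by positivity)))

lemma gphi_anti {a b : ℝ} (ha : 0 ≤ a) (hab : a ≤ b) : gphi b ≤ gphi a := by
  unfold gphi
  exact mul_le_mul_of_nonneg_left (Real.exp_le_exp.2 (by nlinarith))
    (le_of_lt (inv_pos.2 (Real.sqrt_pos.2 (by positivity))))

lemma Phibar_sub {a b : ℝ} (h : a ≤ b) :
    Phibar a = (∫ s in a..b, gphi s) + Phibar b := by
  rw [intervalIntegral.integral_of_le h]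
  unfold Phibar
  rw [← MeasureTheory.setIntegral_union (Set.Ioc_disjoint_Ioi le_rfl) measurableSet_Ioi
    gphi_integrable.integrableOn gphi_integrable.integrableOn, Set.Ioc_union_Ioi_eq_Ioi h]

lemma Phibar_strictAnti : StrictAnti Phibar := by
  intro a b hab
  have hpos : 0 < ∫ s in a..b, gphi s :=
    intervalIntegral.intervalIntegral_pos_of_pos (gphi_integrable.intervalIntegrable) (fun x => gphi_pos x) hab
  have := Phibar_sub hab.le
  linarith

lemma Phibar_tendsto_top : Tendsto Phibar atTop (𝓝 0) := by
  have h := intervalIntegral_tendsto_integral_Ioi 0 gphi_integrable.integrableOn tendsto_id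
  have h2 : Tendsto (fun b => Phibar 0 - ∫ s in (0:ℝ)..b, gphi s) atTop
      (𝓝 (Phibar 0 - Phibar 0)) := tendsto_const_nhds.sub h
  rw [sub_self] at h2
  refine h2.congr' ?_
  filter_upwards [eventually_ge_atTop (0:ℝ)] with b hb
  have := Phibar_sub hb
  linarith

lemma Phibar_zero : Phibar 0 = 1/2 := by
  have heven : ∀ s : ℝ, gphi (-s) = gphi s := by intro s; unfold gphi; ring_nf
  have h1 : ∫ s in Set.Iic (0:ℝ), gphi s = Phibar 0 := by
    have := integral_comp_neg_Ioi (c := (0:ℝ)) (f := gphi)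
    simp only [neg_zero] at this
    rw [← this]
    exact integral_congr_ae (by filter_upwards with s using heven s)
  have h2 : (∫ s in Set.Iic (0:ℝ), gphi s) + Phibar 0 = 1 := by
    unfold Phibar
    rw [intervalIntegral.integral_Iic_add_Ioi gphi_integrable.integrableOn gphi_integrable.integrableOn]
    exact integral_gphi
  linarith

lemma Phibar_continuous : Continuous Phibar := by
  have h : ∀ t, Phibar t = Phibar 0 - ∫ s in (0:ℝ)..t, gphi s := by
    intro t
    rcases le_or_gt 0 t with ht | ht
    · have := Phibar_sub ht; linarith
    · have := Phibar_sub ht.le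
      rw [intervalIntegral.integral_symm] at this
      linarith
  have : Phibar = fun t => Phibar 0 - ∫ s in (0:ℝ)..t, gphi s := funext h
  rw [this]
  exact continuous_const.sub (intervalIntegral.continuous_primitive
    (fun a b => gphi_integrable.intervalIntegrable) 0)

lemma exists_Phibar {x : ℝ} (h0 : 0 < x) (h1 : x < 1/2) : ∃ t, 0 < t ∧ Phibar t = x := by
  obtain ⟨T, hT⟩ : ∃ T, Phibar T < x := (Phibar_tendsto_top.eventually_lt_const h0).exists
  have hT0 : 0 < T := by
    by_contra hc
    push_neg at hc
    have := Phibar_strictAnti.antitone hc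
    rw [Phibar_zero] at this
    linarith
  have hmem : x ∈ Set.Icc (Phibar T) (Phibar 0) := ⟨hT.le, by rw [Phibar_zero]; linarith⟩
  obtain ⟨t, ht, htx⟩ := intermediate_value_Icc' hT0.le Phibar_continuous.continuousOn hmem
  refine ⟨t, ?_, htx⟩
  rcases ht.1.lt_or_eq with h | h
  · exact h
  · exfalso; rw [← h, Phibar_zero] at htx; linarith

lemma gphi_hasDeriv (s : ℝ) : HasDerivAt gphi (-s * gphi s) s := by
  have h1 : HasDerivAt (fun t : ℝ => -(t ^ 2) / 2) (-s) s := by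
    have := ((hasDerivAt_pow 2 s).neg).div_const 2
    refine this.congr_deriv ?_
    simp; ring
  have h2 := (Real.hasDerivAt_exp (-(s ^ 2) / 2)).comp s h1
  have h3 := h2.const_mul (Real.sqrt (2 * Real.pi))⁻¹
  refine h3.congr_deriv ?_
  unfold gphi; simp [Function.comp]; ring

lemma mills {u : ℝ} (hu : 0 < u) : u * gphi u / (1 + u ^ 2) ≤ Phibar u := by
  set f : ℝ → ℝ := fun s => -(gphi s / s) with hf
  have hderiv : ∀ s ∈ Set.Ioi u, HasDerivAt f (gphi s * (1 + 1 / s ^ 2)) s := by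
    intro s hs
    have hs0 : s ≠ 0 := (hu.trans hs).ne'
    have := ((gphi_hasDeriv s).div (hasDerivAt_id s) hs0).neg
    refine this.congr_deriv ?_
    simp only [id]
    field_simp
    ring
  have hint : IntegrableOn (fun s => gphi s * (1 + 1 / s ^ 2)) (Set.Ioi u) := by
    have hg : IntegrableOn (fun s => gphi s * (1 + 1 / u ^ 2)) (Set.Ioi u) :=
      (gphi_integrable.mul_const _).integrableOn
    refine hg.mono' ?_ ?_
    · apply AEStronglyMeasurable.mul
      · exact gphi_cont.aestronglyMeasurable.restrict
      · exact (aestronglyMeasurable_const.add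
          ((measurable_const.div (measurable_id.pow_const 2)).aestronglyMeasurable)).restrict
    · filter_upwards [ae_restrict_mem measurableSet_Ioi] with s hs
      have hsu : u ≤ s := (le_of_lt hs)
      have h1 : 1 / s ^ 2 ≤ 1 / u ^ 2 := by
        apply one_div_le_one_div_of_le (by positivity)
        nlinarith
      have := gphi_pos s
      rw [Real.norm_eq_abs, abs_of_pos (by positivity)]
      nlinarith
  have htend : Tendsto f atTop (𝓝 0) := by
    have hg0 : Tendsto gphi atTop (𝓝 0) := by
      have h1 : Tendsto (fun s : ℝ => -(s ^ 2) / 2) atTop atBot := by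
        apply Tendsto.atBot_div_const (by norm_num : (0:ℝ) < 2)
        exact tendsto_neg_atBot_iff.2 (tendsto_pow_atTop (two_ne_zero))
      have h2 := (Real.tendsto_exp_atBot).comp h1
      have h3 := h2.const_mul (Real.sqrt (2 * Real.pi))⁻¹
      rw [mul_zero] at h3
      exact h3
    have := (hg0.div_atTop tendsto_id).neg
    rw [neg_zero] at this
    exact this
  have hcont : ContinuousWithinAt f (Set.Ici u) u := by
    apply ContinuousAt.continuousWithinAt
    exact (gphi_cont.continuousAt.div continuousAt_id hu.ne').neg
  have key := integral_Ioi_of_hasDerivAt_of_tendsto hcont hderiv hint htend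
  have hfu : f u = -(gphi u / u) := rfl
  rw [hfu, zero_sub, neg_neg] at key
  -- key : ∫ s in Ioi u, gphi s * (1 + 1/s^2) = gphi u / u
  have hmono : (∫ s in Set.Ioi u, gphi s * (1 + 1 / s ^ 2)) ≤
      ∫ s in Set.Ioi u, gphi s * (1 + 1 / u ^ 2) := by
    apply setIntegral_mono_on hint ((gphi_integrable.mul_const _).integrableOn) measurableSet_Ioi
    intro s hs
    have h1 : 1 / s ^ 2 ≤ 1 / u ^ 2 := by
      apply one_div_le_one_div_of_le (by positivity)
      nlinarith [le_of_lt (show u < s from hs)]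
    nlinarith [gphi_pos s]
  rw [key] at hmono
  have hPhi : (∫ s in Set.Ioi u, gphi s * (1 + 1 / u ^ 2)) = Phibar u * (1 + 1 / u ^ 2) := by
    rw [integral_mul_const]; rfl
  rw [hPhi] at hmono
  have h2 : (0:ℝ) < 1 + 1 / u ^ 2 := by positivity
  rw [div_le_iff₀ (by positivity : (0:ℝ) < 1 + u ^ 2)]
  have h3 : gphi u / u * u ^ 2 = u * gphi u := by field_simp
  have h4 : Phibar u * (1 + 1 / u ^ 2) * u ^ 2 = Phibar u * (1 + u ^ 2) := by
    have hx : (1 + 1 / u ^ 2) * u ^ 2 = 1 + u ^ 2 := by field_simp; ring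
    rw [mul_assoc, hx]
  have h5 := mul_le_mul_of_nonneg_right hmono (sq_nonneg u)
  rw [h3, h4] at h5
  linarith

lemma PhibarInv_spec {x : ℝ} (h0 : 0 < x) (h1 : x < 1/2) :
    Phibar (PhibarInv x) = x := by
  obtain ⟨t, _, ht⟩ := exists_Phibar h0 h1
  exact Function.invFun_eq ⟨t, ht⟩

theorem quantile_diff_lower_ratio (x y : ℝ) (hx0 : 0 < x) (hxy : x ≤ y) (hy : y < 1 / 2) :
    PhibarInv x - PhibarInv y ≥
      ((PhibarInv y) ^ 2 / (1 + (PhibarInv y) ^ 2)) * ((y - x) / (y * PhibarInv y)) := by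
  have hy0 : 0 < y := lt_of_lt_of_le hx0 hxy
  have hx12 : x < 1/2 := lt_of_le_of_lt hxy hy
  set u := PhibarInv y with hu_def
  set v := PhibarInv x with hv_def
  have hu : Phibar u = y := PhibarInv_spec hy0 hy
  have hv : Phibar v = x := PhibarInv_spec hx0 hx12
  have hu0 : 0 < u := by
    by_contra hc
    push_neg at hc
    have := Phibar_strictAnti.antitone hc
    rw [hu, Phibar_zero] at this
    linarith
  have huv : u ≤ v := by
    by_contra hc
    push_neg at hc
    have := Phibar_strictAnti hc
    rw [hu, hv] at this
    linarith
  have hgu : 0 < gphi u := gphi_pos u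
  -- key1 : y - x ≤ gphi u * (v - u)
  have key1 : y - x ≤ gphi u * (v - u) := by
    have heq : Phibar u = (∫ s in u..v, gphi s) + Phibar v := Phibar_sub huv
    have hle : (∫ s in u..v, gphi s) ≤ ∫ s in u..v, gphi u := by
      apply intervalIntegral.integral_mono_on huv (gphi_integrable.intervalIntegrable)
        (intervalIntegrable_const)
      intro s hs
      exact gphi_anti hu0.le hs.1
    rw [intervalIntegral.integral_const, smul_eq_mul] at hle
    rw [hu, hv] at heq
    nlinarith
  -- key2 : u * gphi u ≤ y * (1 + u^2)
  have key2 : u * gphi u ≤ y * (1 + u ^ 2) := by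
    have := mills hu0
    rw [hu] at this
    rw [div_le_iff₀ (by positivity : (0:ℝ) < 1 + u ^ 2)] at this
    linarith
  rw [ge_iff_le, show u ^ 2 / (1 + u ^ 2) * ((y - x) / (y * u)) = (y - x) * u / ((1 + u ^ 2) * y) by
    field_simp]
  rw [div_le_iff₀ (by positivity : (0:ℝ) < (1 + u ^ 2) * y)]
  nlinarith [mul_nonneg (sub_nonneg.2 huv) (sub_nonneg.2 key2)]
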